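/- For each n ∈ ℕ let (X_n, d_n) be a compact metric space with d_n ≤ 1, and let f_n : X_n → X_n be a homeomorphism with the two-sided limit shadowing property (with respect to d_n). Equip X = Π_{n∈ℕ} X_n with the metric D(x,y) = sup_{n∈ℕ} d_n(x_n, y_n)/2^n and let F : X → X be defined by F(x)_n = f_n(x_n). Then F is a homeomorphism of the compact metric space (X, D) and has the two-sided limit shadowing property. -/

import Mathlib

open Filter Topology

/-- `g` has the two-sided limit shadowing property with respect to the distance
function `ρ`: every sequence with `ρ(g(x i), x (i+1)) → 0` as `|i| → ∞` is shadowed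
in the sense that `ρ(g^i(y), x i) → 0` as `|i| → ∞` for some `y`. -/
def TwoSidedLimitShadowingD {Y : Type*} (ρ : Y → Y → ℝ) (g : Y ≃ Y) : Prop :=
  ∀ x : ℤ → Y,
    Tendsto (fun i : ℤ => ρ (g (x i)) (x (i + 1))) cofinite (𝓝 0) →
    ∃ y : Y, Tendsto (fun i : ℤ => ρ ((g ^ i) y) (x i)) cofinite (𝓝 0)

/-- The metric `D(x,y) = sup_n d_n(x_n, y_n) / 2^n` on a countable product. -/
noncomputable def piDist {X : ℕ → Type*} [∀ n, MetricSpace (X n)]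
    (x y : ∀ n, X n) : ℝ :=
  ⨆ n : ℕ, dist (x n) (y n) / (2 : ℝ) ^ n

lemma piCongrRight_zpow {X : ℕ → Type*} (g : ∀ n, X n ≃ X n) (i : ℤ) :
    (Equiv.piCongrRight g) ^ i = Equiv.piCongrRight (fun n => (g n) ^ i) := by
  induction i using Int.induction_on with
  | zero => ext x n; rfl
  | succ k ih =>
      rw [zpow_add_one, ih]
      ext x n
      simp [zpow_add_one]
  | pred k ih =>
      rw [zpow_sub_one, ih]
      ext x n
      simp [zpow_sub_one]

/-- If each `f n` is a homeomorphism of a compact metric space `X n` (with metric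
`≤ 1`) having the two-sided limit shadowing property, then the product map `F` on
`Π n, X n` (with the metric `D`, which induces the product topology) is a
homeomorphism with the two-sided limit shadowing property. -/
theorem stmt19 {X : ℕ → Type*} [∀ n, MetricSpace (X n)] [∀ n, CompactSpace (X n)]
    (hd : ∀ n, ∀ x y : X n, dist x y ≤ 1)
    (f : ∀ n, X n ≃ₜ X n)
    (hf : ∀ n, TwoSidedLimitShadowingD dist (f n).toEquiv) :
    IsHomeomorph (⇑(Equiv.piCongrRight fun n => (f n).toEquiv)) ∧
    TwoSidedLimitShadowingD piDist (Equiv.piCongrRight fun n => (f n).toEquiv) := by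
  have hterm : ∀ (n : ℕ) (x y : ∀ n, X n),
      dist (x n) (y n) / (2 : ℝ) ^ n ≤ (1/2 : ℝ) ^ n := by
    intro n x y
    rw [div_le_iff₀ (by positivity), div_pow, one_pow, div_mul_cancel₀]
    · exact hd n _ _
    · positivity
  have hbdd : ∀ x y : ∀ n, X n,
      BddAbove (Set.range fun n : ℕ => dist (x n) (y n) / (2 : ℝ) ^ n) := by
    intro x y
    refine ⟨1, ?_⟩
    rintro _ ⟨n, rfl⟩
    exact (hterm n x y).trans (pow_le_one₀ (by norm_num) (by norm_num))
  have hle : ∀ (x y : ∀ n, X n) (n : ℕ),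
      dist (x n) (y n) / (2 : ℝ) ^ n ≤ piDist x y := fun x y n =>
    le_ciSup (hbdd x y) n
  constructor
  · have : ⇑(Equiv.piCongrRight fun n => (f n).toEquiv) = ⇑(Homeomorph.piCongrRight f) := rfl
    rw [this]
    exact (Homeomorph.piCongrRight f).isHomeomorph
  · intro x hx
    -- each coordinate is a limit pseudo-orbit
    have hcoord : ∀ n : ℕ,
        Tendsto (fun i : ℤ => dist ((f n) (x i n)) (x (i + 1) n)) cofinite (𝓝 0) := by
      intro n
      have h1 : Tendsto (fun i : ℤ => dist ((f n) (x i n)) (x (i + 1) n) / (2:ℝ)^n)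
          cofinite (𝓝 0) := by
        refine squeeze_zero (fun i => by positivity) (fun i => ?_) hx
        exact hle ((Equiv.piCongrRight fun n => (f n).toEquiv) (x i)) (x (i+1)) n
      have := h1.const_mul ((2:ℝ)^n)
      simp only [mul_zero] at this
      convert this using 2 with i
      field_simp
    choose y hy using fun n => hf n (fun i => x i n) (hcoord n)
    refine ⟨y, ?_⟩
    have hzpow : ∀ (i : ℤ) (n : ℕ),
        ((Equiv.piCongrRight fun n => (f n).toEquiv) ^ i) y n
          = (((f n).toEquiv) ^ i) (y n) := by
      intro i n
      rw [piCongrRight_zpow]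
      rfl
    rw [NormedAddCommGroup.tendsto_nhds_zero]
    intro ε hε
    obtain ⟨N, hN⟩ : ∃ N : ℕ, (1/2 : ℝ) ^ N < ε / 2 :=
      exists_pow_lt_of_lt_one (by positivity) (by norm_num)
    have hev : ∀ᶠ i : ℤ in cofinite, ∀ n ∈ Finset.range N,
        dist ((((f n).toEquiv) ^ i) (y n)) (x i n) / (2:ℝ)^n < ε/2 := by
      rw [eventually_all_finset (Finset.range N)]
      intro n hn
      have := (hy n).eventually (gt_mem_nhds (by positivity : (0:ℝ) < ε/2 * (2:ℝ)^n))
      filter_upwards [this] with i hi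
      rw [div_lt_iff₀ (by positivity)]
      exact hi
    simp only [Finset.mem_range] at hev
    filter_upwards [hev] with i hi
    have h0 : (0:ℝ) ≤ piDist ((( Equiv.piCongrRight fun n => (f n).toEquiv) ^ i) y) (x i) := by
      refine le_trans (by positivity) (hle _ _ 0)
    rw [Real.norm_eq_abs, abs_of_nonneg h0]
    have hsup : piDist ((( Equiv.piCongrRight fun n => (f n).toEquiv) ^ i) y) (x i) ≤ ε/2 := by
      refine ciSup_le fun n => ?_
      rcases lt_or_ge n N with h | h
      · rw [hzpow i n]
        exact (hi n h).le
      · refine le_trans (hterm n _ _) ?_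
        calc (1/2:ℝ)^n ≤ (1/2:ℝ)^N := by
              apply pow_le_pow_of_le_one (by norm_num) (by norm_num) h
          _ ≤ ε/2 := hN.le
    linarith
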